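/- The nonunitary shuffle algebra ℌ¹ш,0 = ℚ⟨x₀,x₁⟩x₁ (words ending in x₁, with shuffle product), equipped with the left-multiplication operator I₀(w) = x₀w, is generated by x₁ as a nonunitary Rota-Baxter algebra: the smallest subspace containing x₁ and closed under shuffle product and I₀ is all of ℚ⟨x₀,x₁⟩x₁. -/

import Mathlib

/-- Word-level shuffle product on `ℚ⟨x₀,x₁⟩` (words over `Bool`, `x₀ = false`,
`x₁ = true`). -/
noncomputable def shq : List Bool → List Bool → (List Bool →₀ ℚ)
  | [], l => Finsupp.single l 1
  | a :: as, [] => Finsupp.single (a :: as) 1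
  | a :: as, b :: bs =>
      Finsupp.mapDomain (a :: ·) (shq as (b :: bs))
      + Finsupp.mapDomain (b :: ·) (shq (a :: as) bs)
  termination_by x y => x.length + y.length

/-- The bilinear extension of `shq` to the shuffle algebra `ℚ⟨x₀,x₁⟩`. -/
noncomputable def shMulF (f g : List Bool →₀ ℚ) : List Bool →₀ ℚ :=
  f.sum fun u a => g.sum fun v b => (a * b) • shq u v

lemma shq_single_true (b : Bool) (bs : List Bool) :
    shq [true] (b::bs) = Finsupp.single (true::b::bs) 1
      + Finsupp.mapDomain (b :: ·) (shq [true] bs) := by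
  rw [shq, shq]; simp [Finsupp.mapDomain_single]

lemma shMulF_single (u v : List Bool) :
    shMulF (Finsupp.single u 1) (Finsupp.single v 1) = shq u v := by
  unfold shMulF
  rw [Finsupp.sum_single_index (by simp), Finsupp.sum_single_index (by simp)]
  simp

/-- last element of nonempty list doesn't depend on default -/
lemma lastD_indep {l : List Bool} (h : l ≠ []) (c d : Bool) :
    l.getLastD c = l.getLastD d := by
  cases l with
  | nil => exact absurd rfl h
  | cons a t => rw [List.getLastD_cons, List.getLastD_cons]

lemma shq1_support {y : List Bool} (hy : y.getLastD true = true) :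
    ∀ u ∈ (shq [true] y).support, u.length = y.length + 1 ∧ u.getLastD false = true := by
  induction y with
  | nil =>
    intro u hu
    rw [show shq [true] [] = Finsupp.single [true] 1 from by rw [shq]] at hu
    simp only [Finsupp.support_single_ne_zero _ (one_ne_zero), Finset.mem_singleton] at hu
    subst hu; simp
  | cons b bs ih =>
    intro u hu
    rw [shq_single_true] at hu
    classical
    have hu' := Finsupp.support_add hu
    rw [Finset.mem_union] at hu'
    rcases hu' with h | h
    · have : u = true::b::bs := by
        simpa [Finsupp.support_single_ne_zero _ (one_ne_zero)] using h
      subst this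
      constructor
      · simp
      · simp only [List.getLastD_cons]
        rw [List.getLastD_cons] at hy
        rcases eq_or_ne bs [] with rfl | hbs
        · simp at hy; simp [hy]
        · rwa [lastD_indep hbs b false] at hy ⊢
    · have h2 := Finsupp.mapDomain_support h
      rw [Finset.mem_image] at h2
      obtain ⟨u', hu', rfl⟩ := h2
      have hbs : bs.getLastD true = true := by
        rcases eq_or_ne bs [] with rfl | hbs
        · rfl
        · rw [List.getLastD_cons] at hy
          rwa [lastD_indep hbs true b]
      obtain ⟨hlen, hlast⟩ := ih hbs u' hu'
      refine ⟨by simp [hlen], ?_⟩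
      have hne : u' ≠ [] := by rintro rfl; simp at hlast
      rw [List.getLastD_cons, lastD_indep hne b false]
      exact hlast

lemma shq_rep (k : ℕ) :
    shq [true] (List.replicate k true)
      = ((k:ℚ)+1) • Finsupp.single (List.replicate (k+1) true) 1 := by
  induction k with
  | zero => simp [show shq [true] [] = Finsupp.single [true] 1 from by rw [shq]]
  | succ k ih =>
    rw [List.replicate_succ, shq_single_true, ih, Finsupp.mapDomain_smul,
      Finsupp.mapDomain_single]
    rw [show (true :: List.replicate (k+1) true) = List.replicate (k+1+1) true from
      (List.replicate_succ (a := true) (n := k+1)).symm]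
    rw [show (true :: true :: List.replicate k true) = List.replicate (k+1+1) true from by
      simp [List.replicate_succ]]
    push_cast
    module

lemma shq_L (j : ℕ) (rest : List Bool) :
    shq [true] (List.replicate j true ++ false :: rest)
      = ((j:ℚ)+1) • Finsupp.single (List.replicate (j+1) true ++ false :: rest) 1
        + Finsupp.mapDomain (fun l => List.replicate j true ++ false :: l) (shq [true] rest) := by
  induction j with
  | zero => simpa [List.replicate_succ] using shq_single_true false rest
  | succ j ih =>
    rw [List.replicate_succ, List.cons_append, shq_single_true, ih,
      Finsupp.mapDomain_add, Finsupp.mapDomain_smul, Finsupp.mapDomain_single]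
    rw [show (Finsupp.mapDomain (true :: ·)
        (Finsupp.mapDomain (fun l => List.replicate j true ++ false :: l) (shq [true] rest)))
      = Finsupp.mapDomain (fun l => List.replicate (j+1) true ++ false :: l) (shq [true] rest) from by
        rw [← Finsupp.mapDomain_comp]; rfl]
    have h1 : (true :: (List.replicate j true ++ false :: rest))
        = List.replicate (j+1) true ++ false :: rest := by simp [List.replicate_succ]
    have h2 : (true :: (List.replicate (j+1) true ++ false :: rest))
        = List.replicate (j+1+1) true ++ false :: rest := by simp [List.replicate_succ]
    rw [h1, h2, show (fun l => true :: List.replicate j true ++ false :: l)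
      = (fun l => List.replicate (j+1) true ++ false :: l) from by
        funext l; simp [List.replicate_succ]]
    push_cast
    module

lemma lastD_append (l : List Bool) (b : Bool) (t : List Bool) (d : Bool) :
    (l ++ b :: t).getLastD d = (b :: t).getLastD d := by
  induction l with
  | nil => rfl
  | cons a l ih =>
    rw [List.cons_append, List.getLastD_cons,
      lastD_indep (by simp : l ++ b :: t ≠ []) a d, ih]

lemma takeWhile_rep (j : ℕ) (l : List Bool) :
    ((List.replicate j true ++ false :: l).takeWhile (· = true)).length = j := by
  induction j with
  | zero => simp [List.takeWhile_cons]
  | succ j ih => simp [List.replicate_succ, List.takeWhile_cons, ih]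

lemma decomp (w : List Bool) : (∃ k, w = List.replicate k true)
    ∨ (∃ j rest, w = List.replicate j true ++ false :: rest) := by
  induction w with
  | nil => exact Or.inl ⟨0, rfl⟩
  | cons b t ih =>
    cases b
    · exact Or.inr ⟨0, t, rfl⟩
    · rcases ih with ⟨k, rfl⟩ | ⟨j, rest, rfl⟩
      · exact Or.inl ⟨k+1, by simp [List.replicate_succ]⟩
      · exact Or.inr ⟨j+1, rest, by simp [List.replicate_succ]⟩

/-- The nonunitary shuffle algebra `ℚ⟨x₀,x₁⟩x₁` (span of words ending in `x₁`),
with the operator `I₀(w) = x₀w`, is generated by `x₁` as a nonunitary Rota-Baxter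
algebra: any subspace containing `x₁` and closed under the shuffle product and
`I₀` contains every word ending in `x₁`. -/
theorem H1_generated_by_x1 (S : Submodule ℚ (List Bool →₀ ℚ))
    (hx1 : Finsupp.single [true] (1 : ℚ) ∈ S)
    (hmul : ∀ f g : List Bool →₀ ℚ, f ∈ S → g ∈ S → shMulF f g ∈ S)
    (hI0 : ∀ f : List Bool →₀ ℚ, f ∈ S → Finsupp.mapDomain (false :: ·) f ∈ S) :
    ∀ w : List Bool, w.getLastD false = true → Finsupp.single w (1 : ℚ) ∈ S := by
  classical
  -- membership for mapDomain images
  have hmapmem : ∀ (g : List Bool → List Bool) (f : List Bool →₀ ℚ),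
      (∀ u ∈ f.support, Finsupp.single (g u) (1:ℚ) ∈ S) → Finsupp.mapDomain g f ∈ S := by
    intro g f h
    rw [show Finsupp.mapDomain g f = f.sum (fun a c => Finsupp.single (g a) c) from rfl]
    apply Submodule.sum_mem
    intro u hu
    show Finsupp.single (g u) (f u) ∈ S
    rw [show Finsupp.single (g u) (f u) = (f u) • Finsupp.single (g u) (1:ℚ) from by
      rw [Finsupp.smul_single, smul_eq_mul, mul_one]]
    exact S.smul_mem _ (h u hu)
  -- all-true words
  have hallTrue : ∀ k, Finsupp.single (List.replicate (k+1) true) (1:ℚ) ∈ S := by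
    intro k; induction k with
    | zero => simpa using hx1
    | succ k ih =>
      have h := hmul _ _ hx1 ih
      rw [shMulF_single, shq_rep] at h
      have h2 := S.smul_mem (((k:ℚ)+1+1)⁻¹) h
      rw [smul_smul] at h2
      rw [show ((k:ℚ)+1+1)⁻¹ * ((((k:ℕ)+1:ℕ):ℚ)+1) = 1 from by
        push_cast; rw [inv_mul_cancel₀ (by positivity)], one_smul] at h2
      exact h2
  have key : ∀ m (w : List Bool),
      w.length * (w.length+1) + (w.takeWhile (· = true)).length ≤ m →
      w.getLastD false = true → Finsupp.single w (1:ℚ) ∈ S := by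
    intro m
    induction m with
    | zero =>
      intro w hm hw
      cases w with
      | nil => simp at hw
      | cons a t =>
        have h0 : 0 < (a::t).length * ((a::t).length+1) :=
          Nat.mul_pos (by simp) (by positivity)
        omega
    | succ m ih =>
      intro w hm hw
      rcases decomp w with ⟨k, rfl⟩ | ⟨j, rest, rfl⟩
      · cases k with
        | zero => simp at hw
        | succ k => exact hallTrue k
      · -- w = replicate j true ++ false :: rest
        have hrest : rest.getLastD false = true := by
          rw [lastD_append, List.getLastD_cons] at hw
          exact hw
        have hrne : rest ≠ [] := by rintro rfl; simp at hrest
        have hLlen := List.length_append (as := List.replicate j true) (bs := false :: rest)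
        cases j with
        | zero =>
          -- w = false :: rest : use I₀
          have hmu : rest.length * (rest.length+1) + (rest.takeWhile (· = true)).length ≤ m := by
            have h1 : (rest.takeWhile (· = true)).length ≤ rest.length :=
              (List.takeWhile_prefix _).length_le
            simp only [List.replicate, List.nil_append, List.length_cons,
              takeWhile_rep 0 rest] at hm
            nlinarith
          have h1 := ih rest hmu hrest
          have := hI0 _ h1
          rwa [Finsupp.mapDomain_single] at this
        | succ j =>
          -- w = replicate (j+1) true ++ false :: rest
          set v : List Bool := List.replicate j true ++ false :: rest with hv
          have hvlast : v.getLastD false = true := by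
            rw [hv, lastD_append, List.getLastD_cons]; exact hrest
          have hvmu : v.length * (v.length+1) + (v.takeWhile (· = true)).length ≤ m := by
            rw [hv]
            simp only [List.length_append, List.length_replicate, List.length_cons,
              takeWhile_rep]
            simp only [List.length_append, List.length_replicate, List.length_cons,
              takeWhile_rep] at hm
            nlinarith
          have hvS := ih v hvmu hvlast
          have hprod := hmul _ _ hx1 hvS
          rw [shMulF_single, hv, shq_L] at hprod
          -- the remainder term
          have hrt : rest.getLastD true = true := by
            rwa [lastD_indep hrne true false]
          have hmapS : Finsupp.mapDomain
              (fun l => List.replicate j true ++ false :: l) (shq [true] rest) ∈ S := by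
            apply hmapmem
            intro u hu
            obtain ⟨hlen, hlast⟩ := shq1_support hrt u hu
            apply ih
            · simp only [List.length_append, List.length_replicate, List.length_cons,
                takeWhile_rep, hlen]
              simp only [List.length_append, List.length_replicate, List.length_cons,
                takeWhile_rep] at hm
              nlinarith
            · rw [lastD_append, List.getLastD_cons]
              have hune : u ≠ [] := by rintro rfl; simp at hlast
              rwa [lastD_indep hune false false]
          have hsub := S.sub_mem hprod hmapS
          rw [add_sub_cancel_right] at hsub
          have h2 := S.smul_mem (((j:ℚ)+1)⁻¹) hsub
          rw [smul_smul, inv_mul_cancel₀ (by positivity), one_smul] at h2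
          exact h2
  intro w hw
  exact key (w.length * (w.length+1) + (w.takeWhile (· = true)).length) w le_rfl hw
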